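/- Let (X,d) be an ultrametric space. Define h_X : I_ω(X) → J_ω(X) by h_X(∨_i α_i ⊙ δ_{x_i}) = ∨_i λ(α_i) ∧ δ_{x_i}, where λ : [−∞,0] → [−∞,+∞] is given by λ(t) = −ln(−t) for t ∈ (−∞,0), λ(−∞) = −∞ and λ(0) = +∞. Then h_X is a well-defined bijection and an isometry: d̂(h_X(μ), h_X(ν)) = d̂(μ,ν) for all μ, ν ∈ I_ω(X). In particular, the spaces (I_ω(X), d̂) and (J_ω(X), d̂) are isometric. -/

import Mathlib

open scoped ENNReal

noncomputable section

/-- A metric is an *ultrametric* if the strong triangle inequality holds. -/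
def IsUltra (X : Type*) [MetricSpace X] : Prop :=
  ∀ x y z : X, dist x y ≤ max (dist x z) (dist z y)

/-- `mmOf x α` is the max-min functional `∨ᵢ αᵢ ∧ δ_{x i}`,
`φ ↦ maxᵢ min (α i) (φ (x i))` (computed in the extended reals). -/
def mmOf {A : Type*} {n : ℕ} (x : Fin (n + 1) → A) (α : Fin (n + 1) → EReal) :
    (A → ℝ) → ℝ :=
  fun φ => (⨆ i, min (α i) ((φ (x i) : EReal))).toReal

/-- `μ` is a max-min measure of finite support, with support contained in `S`. -/
def IsMMOn {A : Type*} (S : Set A) (μ : (A → ℝ) → ℝ) : Prop :=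
  ∃ (n : ℕ) (x : Fin (n + 1) → A) (α : Fin (n + 1) → EReal),
    (∀ i, x i ∈ S) ∧ (∃ i, α i = ⊤) ∧ μ = mmOf x α

/-- `μ` is a max-min measure of finite support. -/
def IsMM {A : Type*} (μ : (A → ℝ) → ℝ) : Prop :=
  IsMMOn Set.univ μ

/-- `idemOf x α` is the idempotent measure `∨ᵢ αᵢ ⊙ δ_{x i}`,
`φ ↦ maxᵢ (α i + φ (x i))` (computed in the extended reals). -/
def idemOf {A : Type*} {n : ℕ} (x : Fin (n + 1) → A) (α : Fin (n + 1) → EReal) :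
    (A → ℝ) → ℝ :=
  fun φ => (⨆ i, (α i + (φ (x i) : EReal))).toReal

/-- `μ` is an idempotent measure of finite support, with support contained in `S`. -/
def IsIdemOn {A : Type*} (S : Set A) (μ : (A → ℝ) → ℝ) : Prop :=
  ∃ (n : ℕ) (x : Fin (n + 1) → A) (α : Fin (n + 1) → EReal),
    (∀ i, x i ∈ S) ∧ (∀ i, α i ≤ 0) ∧ (∃ i, α i = 0) ∧ μ = idemOf x α

/-- `μ` is an idempotent measure of finite support. -/
def IsIdem {A : Type*} (μ : (A → ℝ) → ℝ) : Prop :=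
  IsIdemOn Set.univ μ

/-- The Dirac measure `δ_a`. -/
def dirac {A : Type*} (a : A) : (A → ℝ) → ℝ := fun φ => φ a

/-- `FrE e r φ`: the function `φ` is constant on every open `r`-ball of the
(extended-valued) distance `e`; this is the family `𝓕_r`. -/
def FrE {A : Type*} (e : A → A → ℝ≥0∞) (r : ℝ≥0∞) (φ : A → ℝ) : Prop :=
  ∀ x y : A, e x y < r → φ x = φ y

/-- The ultrametric `d̂` on functionals:
`d̂(μ,ν) = inf {r > 0 ∣ μ φ = ν φ for every φ ∈ 𝓕_r}`. -/
def dHatE {A : Type*} (e : A → A → ℝ≥0∞) (μ ν : (A → ℝ) → ℝ) : ℝ≥0∞ :=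
  sInf {r : ℝ≥0∞ | 0 < r ∧ ∀ φ : A → ℝ, FrE e r φ → μ φ = ν φ}

/-- The pushforward `J_ω(f)` of functionals along `f`. -/
def Jmap {A B : Type*} (f : A → B) (μ : (A → ℝ) → ℝ) : (B → ℝ) → ℝ :=
  fun φ => μ (φ ∘ f)

/-- The extended distance of a metric space, as a two-variable function. -/
def eD (X : Type*) [PseudoEMetricSpace X] : X → X → ℝ≥0∞ :=
  fun x y => edist x y

/-- The monad multiplication (`ξ` for max-min measures, `ζ` for idempotent
measures): `mult M φ = M (μ ↦ μ φ)`. -/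
def mult {A : Type*} (M : (((A → ℝ) → ℝ) → ℝ) → ℝ) : (A → ℝ) → ℝ :=
  fun φ => M fun μ => μ φ


/-- The order-preserving bijection `λ : [-∞,0] → [-∞,+∞]`:
`λ(t) = -ln(-t)` for `t ∈ (-∞,0)`, `λ(-∞) = -∞`, `λ(0) = +∞`. -/
def lam (t : EReal) : EReal :=
  if t = ⊥ then ⊥ else if t = 0 then ⊤ else ((-Real.log (-t.toReal) : ℝ) : EReal)

namespace IJAux
open scoped Classical


lemma lam_bot : lam ⊥ = ⊥ := by simp [lam]
lemma lam_zero : lam 0 = ⊤ := by simp [lam]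

lemma lam_coe {r : ℝ} (hr : r ≠ 0) : lam ↑r = ((-Real.log (-r) : ℝ) : EReal) := by
  simp [lam, hr, EReal.coe_ne_bot]

lemma real_of (a : EReal) (hbot : a ≠ ⊥) (htop : a ≠ ⊤) : ∃ r : ℝ, a = ↑r :=
  ⟨a.toReal, (EReal.coe_toReal htop hbot).symm⟩

lemma lam_mono {a b : EReal} (hab : a ≤ b) (hb : b ≤ 0) : lam a ≤ lam b := by
  by_cases ha : a = ⊥
  · simp [ha, lam_bot]
  by_cases hb0 : b = 0
  · simp [hb0, lam_zero]
  have hbbot : b ≠ ⊥ := fun h => ha (le_bot_iff.mp (h ▸ hab))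
  have hbtop : b ≠ ⊤ := fun h => by simp [h] at hb
  obtain ⟨s, rfl⟩ := real_of b hbbot hbtop
  have hatop : a ≠ ⊤ := fun h => by simp [h] at hab
  obtain ⟨r, rfl⟩ := real_of a ha hatop
  have ha0 : r ≠ 0 := by
    rintro rfl
    apply hb0
    have : (0:EReal) ≤ ↑s := by exact_mod_cast hab
    exact le_antisymm hb this
  have hs0 : s ≠ 0 := by exact_mod_cast hb0
  have hrs : r ≤ s := by exact_mod_cast hab
  have hsneg : s < 0 := lt_of_le_of_ne (by exact_mod_cast hb) hs0
  rw [lam_coe ha0, lam_coe hs0]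
  have : Real.log (-s) ≤ Real.log (-r) := Real.log_le_log (by linarith) (by linarith)
  exact_mod_cast neg_le_neg this

lemma lam_strictMono {a b : EReal} (hab : a < b) (hb : b ≤ 0) : lam a < lam b := by
  by_cases hb0 : b = 0
  · subst hb0
    rw [lam_zero]
    apply lt_top_iff_ne_top.mpr
    by_cases ha : a = ⊥
    · simp [ha, lam_bot]
    have hatop : a ≠ ⊤ := fun h => by simp [h] at hab
    obtain ⟨r, rfl⟩ := real_of a ha hatop
    have hr0 : r ≠ 0 := by intro h; subst h; exact lt_irrefl _ (by exact_mod_cast hab)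
    simp [lam_coe hr0]
  have hbbot : b ≠ ⊥ := fun h => not_lt_bot (h ▸ hab)
  have hbtop : b ≠ ⊤ := fun h => by simp [h] at hb
  obtain ⟨s, rfl⟩ := real_of b hbbot hbtop
  have hs0 : s ≠ 0 := by exact_mod_cast hb0
  have hsneg : s < 0 := lt_of_le_of_ne (by exact_mod_cast hb) hs0
  rw [lam_coe hs0]
  by_cases ha : a = ⊥
  · simp [ha, lam_bot]
    exact EReal.bot_lt_coe _
  have hatop : a ≠ ⊤ := fun h => by simp [h] at hab
  obtain ⟨r, rfl⟩ := real_of a ha hatop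
  have hrs : r < s := by exact_mod_cast hab
  have hr0 : r ≠ 0 := by intro h; subst h; linarith
  rw [lam_coe hr0]
  have : Real.log (-s) < Real.log (-r) := Real.log_lt_log (by linarith) (by linarith)
  exact_mod_cast neg_lt_neg this

lemma lam_injOn {a b : EReal} (ha : a ≤ 0) (hb : b ≤ 0) (h : lam a = lam b) : a = b := by
  rcases lt_trichotomy a b with hlt | heq | hgt
  · exact absurd h (ne_of_lt (lam_strictMono hlt hb))
  · exact heq
  · exact absurd h.symm (ne_of_lt (lam_strictMono hgt ha))

noncomputable def lamInv (s : EReal) : EReal :=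
  if s = ⊥ then ⊥ else if s = ⊤ then 0 else ((-Real.exp (-s.toReal) : ℝ) : EReal)

lemma lamInv_le (s : EReal) : lamInv s ≤ 0 := by
  unfold lamInv
  split
  · exact bot_le
  split
  · exact le_refl _
  · have := Real.exp_pos (-s.toReal)
    exact_mod_cast (by linarith : (-Real.exp (-s.toReal) : ℝ) ≤ 0)

lemma lamInv_top : lamInv ⊤ = 0 := by simp [lamInv]

lemma lam_lamInv (s : EReal) : lam (lamInv s) = s := by
  by_cases hb : s = ⊥
  · simp [hb, lamInv, lam_bot]
  by_cases ht : s = ⊤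
  · simp [ht, lamInv, lam_zero]
  obtain ⟨u, rfl⟩ := real_of s hb ht
  have : lamInv ↑u = ((-Real.exp (-u) : ℝ) : EReal) := by
    simp [lamInv, EReal.coe_ne_bot]
  rw [this, lam_coe (by have := Real.exp_pos (-u); intro h; nlinarith : (-Real.exp (-u)) ≠ 0)]
  norm_num [Real.log_exp]



variable {X : Type*}

open Classical in
/-- ball-collapsed weight function -/
def barW (E : X → X → Prop) {n : ℕ} (x : Fin (n+1) → X) (α : Fin (n+1) → EReal) (p : X) : EReal :=
  ⨆ i, if E (x i) p then α i else ⊥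

lemma barW_le_zero {E : X → X → Prop} {n} {x : Fin (n+1) → X} {α} (hα : ∀ i, α i ≤ 0) (p : X) :
    barW E x α p ≤ 0 := by
  apply iSup_le
  intro i
  split
  · exact hα i
  · exact bot_le

lemma le_barW {E : X → X → Prop} {n} {x : Fin (n+1) → X} {α} {p : X} {i : Fin (n+1)}
    (h : E (x i) p) : α i ≤ barW E x α p := by
  have := le_iSup (fun i => if E (x i) p then α i else ⊥) i
  rwa [if_pos h] at this

lemma barW_attain (E : X → X → Prop) {n} (x : Fin (n+1) → X) (α : Fin (n+1) → EReal) (p : X) :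
    barW E x α p = ⊥ ∨ ∃ i, E (x i) p ∧ α i = barW E x α p := by
  obtain ⟨i, hi⟩ := Finite.exists_max (fun i => if E (x i) p then α i else ⊥)
  have hsup : barW E x α p = if E (x i) p then α i else ⊥ :=
    le_antisymm (iSup_le hi) (le_iSup (fun i => if E (x i) p then α i else ⊥) i)
  by_cases h : E (x i) p
  · exact Or.inr ⟨i, h, by rw [hsup, if_pos h]⟩
  · exact Or.inl (by rw [hsup, if_neg h])

lemma exists_of_barW_ne_bot {E : X → X → Prop} {n} {x : Fin (n+1) → X} {α} {p : X}
    (h : barW E x α p ≠ ⊥) : ∃ i, E (x i) p := by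
  rcases barW_attain E x α p with h' | ⟨i, hi, _⟩
  · exact absurd h' h
  · exact ⟨i, hi⟩

/-- barW commutes with lam. -/
lemma barW_lam {E : X → X → Prop} {n} {x : Fin (n+1) → X} {α} (hα : ∀ i, α i ≤ 0) (p : X) :
    barW E x (fun i => lam (α i)) p = lam (barW E x α p) := by
  rcases barW_attain E x α p with h | ⟨i0, hE0, hval⟩
  · rw [h]
    have hall := iSup_eq_bot.mp h
    apply iSup_eq_bot.mpr
    intro i
    by_cases hEi : E (x i) p
    · have : α i = ⊥ := by have := hall i; rwa [if_pos hEi] at this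
      rw [if_pos hEi]
      show lam (α i) = ⊥
      rw [this, lam_bot]
    · rw [if_neg hEi]
  · apply le_antisymm
    · apply iSup_le
      intro i
      by_cases hEi : E (x i) p
      · rw [if_pos hEi]
        exact lam_mono (le_barW hEi) (barW_le_zero hα p)
      · rw [if_neg hEi]; exact bot_le
    · rw [← hval]
      exact le_barW hE0 (α := fun i => lam (α i))

/-- The main congruence lemma. -/
lemma sup_congr {E : X → X → Prop} (hE : Equivalence E)
    (k : EReal → ℝ → EReal)
    (hk : ∀ a b r, a ≤ b → b ≤ 0 → k a r ≤ k b r)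
    (hbot : ∀ r, k ⊥ r = ⊥)
    {n m} {x : Fin (n+1) → X} {y : Fin (m+1) → X} {α : Fin (n+1) → EReal} {β : Fin (m+1) → EReal}
    (hα : ∀ i, α i ≤ 0) (hβ : ∀ j, β j ≤ 0)
    (hbar : ∀ p, barW E x α p = barW E y β p)
    {φ : X → ℝ} (hφ : ∀ a b, E a b → φ a = φ b) :
    (⨆ i, k (α i) (φ (x i))) = ⨆ j, k (β j) (φ (y j)) := by
  -- step 1 : replace weights by barW weights
  have step1 : ∀ {l : ℕ} (w : Fin (l+1) → X) (γ : Fin (l+1) → EReal), (∀ i, γ i ≤ 0) →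
      (⨆ i, k (γ i) (φ (w i))) = ⨆ i, k (barW E w γ (w i)) (φ (w i)) := by
    intro l w γ hγ
    apply le_antisymm
    · apply iSup_le; intro i
      exact le_trans (hk _ _ _ (le_barW (hE.refl _)) (barW_le_zero hγ _))
        (le_iSup (fun i => k (barW E w γ (w i)) (φ (w i))) i)
    · apply iSup_le; intro i
      rcases barW_attain E w γ (w i) with h | ⟨i', hE', hval⟩
      · rw [h, hbot]; exact bot_le
      · have : k (barW E w γ (w i)) (φ (w i)) = k (γ i') (φ (w i')) := by
          rw [← hval, hφ _ _ hE']
        rw [this]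
        exact le_iSup (fun i' => k (γ i') (φ (w i'))) i'
  -- step 2 : one-sided comparison of barW-sups
  have step2 : ∀ {l l' : ℕ} (w : Fin (l+1) → X) (γ : Fin (l+1) → EReal)
      (v : Fin (l'+1) → X) (δ : Fin (l'+1) → EReal), (∀ i, γ i ≤ 0) → (∀ j, δ j ≤ 0) →
      (∀ p, barW E w γ p = barW E v δ p) →
      (⨆ i, k (barW E w γ (w i)) (φ (w i))) ≤ ⨆ j, k (barW E v δ (v j)) (φ (v j)) := by
    intro l l' w γ v δ hγ hδ hb
    apply iSup_le; intro i
    by_cases hbb : barW E w γ (w i) = ⊥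
    · rw [hbb, hbot]; exact bot_le
    · rw [hb (w i)] at hbb
      obtain ⟨j, hj⟩ := exists_of_barW_ne_bot hbb
      have h1 : barW E v δ (w i) ≤ barW E v δ (v j) := by
        apply iSup_le; intro j'
        by_cases hj' : E (v j') (w i)
        · rw [if_pos hj']
          exact le_barW (hE.trans hj' (hE.symm hj))
        · rw [if_neg hj']; exact bot_le
      calc k (barW E w γ (w i)) (φ (w i))
          = k (barW E v δ (w i)) (φ (w i)) := by rw [hb]
        _ ≤ k (barW E v δ (v j)) (φ (w i)) := hk _ _ _ h1 (barW_le_zero hδ _)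
        _ = k (barW E v δ (v j)) (φ (v j)) := by rw [hφ _ _ hj]
        _ ≤ _ := le_iSup (fun j => k (barW E v δ (v j)) (φ (v j))) j
  rw [step1 x α hα, step1 y β hβ]
  exact le_antisymm (step2 x α y β hα hβ hbar) (step2 y β x α hβ hα (fun p => (hbar p).symm))


lemma test_idem {E : X → X → Prop} (hE : Equivalence E) {n} {x : Fin (n+1) → X}
    {α : Fin (n+1) → EReal} (hα : ∀ i, α i ≤ 0) (h0 : ∃ i, α i = 0)
    (p : X) (M : ℝ) (hM : 0 ≤ M) :
    (⨆ i, (α i + (Real.toEReal (if E p (x i) then (0:ℝ) else -M)))) =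
      max (barW E x α p) ((-M : ℝ) : EReal) := by
  apply le_antisymm
  · apply iSup_le; intro i
    by_cases hEi : E p (x i)
    · rw [if_pos hEi]
      have h1 : α i + (((0:ℝ)) : EReal) = α i := by norm_num
      rw [h1]
      exact le_max_of_le_left (le_barW (hE.symm hEi))
    · rw [if_neg hEi]
      refine le_max_of_le_right ?_
      have := add_le_add_left (hα i) (((-M : ℝ)) : EReal)
      rwa [zero_add] at this
  · apply max_le
    · apply iSup_le; intro i
      by_cases hEi : E (x i) p
      · rw [if_pos hEi]
        calc α i = α i + (Real.toEReal (if E p (x i) then (0:ℝ) else -M)) := by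
              rw [if_pos (hE.symm hEi)]; norm_num
        _ ≤ _ := le_iSup (fun i => α i + (Real.toEReal (if E p (x i) then (0:ℝ) else -M))) i
      · rw [if_neg hEi]; exact bot_le
    · obtain ⟨i0, hi0⟩ := h0
      have h2 : ((-M : ℝ) : EReal) ≤ α i0 + (Real.toEReal (if E p (x i0) then (0:ℝ) else -M)) := by
        rw [hi0, zero_add]
        by_cases hEi : E p (x i0)
        · rw [if_pos hEi]; exact_mod_cast (by linarith : (-M:ℝ) ≤ 0)
        · rw [if_neg hEi]
      exact h2.trans (le_iSup (fun i => α i + (Real.toEReal (if E p (x i) then (0:ℝ) else -M))) i0)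

lemma test_mm {E : X → X → Prop} (hE : Equivalence E) {n} {x : Fin (n+1) → X}
    {γ : Fin (n+1) → EReal} (hT : ∃ i, γ i = ⊤) (p : X) (t M : ℝ) (htM : -M ≤ t) :
    (⨆ i, min (γ i) (Real.toEReal (if E p (x i) then t else -M))) =
      max (min (barW E x γ p) ((t:ℝ) : EReal)) ((-M : ℝ) : EReal) := by
  apply le_antisymm
  · apply iSup_le; intro i
    by_cases hEi : E p (x i)
    · rw [if_pos hEi]
      exact le_max_of_le_left (min_le_min (le_barW (hE.symm hEi)) le_rfl)
    · rw [if_neg hEi]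
      exact le_max_of_le_right (min_le_right _ _)
  · apply max_le
    · rcases barW_attain E x γ p with h | ⟨i0, hE0, hval⟩
      · rw [h, min_eq_left bot_le]; exact bot_le
      · have h1 : min (barW E x γ p) ((t:ℝ) : EReal) =
            min (γ i0) (Real.toEReal (if E p (x i0) then t else -M)) := by
          rw [hval, if_pos (hE.symm hE0)]
        rw [h1]
        exact le_iSup (fun i => min (γ i) (Real.toEReal (if E p (x i) then t else -M))) i0
    · obtain ⟨i1, hi1⟩ := hT
      have h2 : ((-M:ℝ) : EReal) ≤
          min (γ i1) (Real.toEReal (if E p (x i1) then t else -M)) := by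
        rw [hi1, min_eq_right le_top]
        by_cases hEi : E p (x i1)
        · rw [if_pos hEi]; exact_mod_cast htM
        · rw [if_neg hEi]
      exact h2.trans (le_iSup (fun i => min (γ i) (Real.toEReal (if E p (x i) then t else -M))) i1)

lemma exists_real_btwn {a b : EReal} (h : a < b) : ∃ t : ℝ, a < ↑t ∧ ↑t ≤ b := by
  induction b using EReal.rec with
  | bot => exact absurd h (by simp)
  | coe s => exact ⟨s, h, le_rfl⟩
  | top =>
    induction a using EReal.rec with
    | bot => exact ⟨0, by simp, le_top⟩
    | coe r => exact ⟨r + 1, by exact_mod_cast lt_add_one r, le_top⟩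
    | top => exact absurd h (lt_irrefl _)

lemma recover_mm_aux {a b : EReal}
    (h : ∀ t M : ℝ, -M ≤ t →
      max (min a ((t:ℝ):EReal)) ((-M:ℝ):EReal) = max (min b ((t:ℝ):EReal)) ((-M:ℝ):EReal)) :
    ¬ a < b := by
  intro hab
  obtain ⟨t, h1, h2⟩ := exists_real_btwn hab
  have hMt : (-(|t|+1):ℝ) ≤ t := by have := neg_abs_le t; linarith
  have hMt' : ((-(|t|+1):ℝ):EReal) < ↑t := by
    exact_mod_cast (by have := neg_abs_le t; linarith : (-(|t|+1):ℝ) < t)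
  have heq := h t (|t|+1) hMt
  rw [min_eq_left h1.le, min_eq_right h2, max_eq_left hMt'.le] at heq
  have hlt : max a ((-(|t|+1):ℝ):EReal) < ((t:ℝ):EReal) := max_lt h1 hMt'
  rw [heq] at hlt
  exact lt_irrefl _ hlt

lemma recover_mm {a b : EReal}
    (h : ∀ t M : ℝ, -M ≤ t →
      max (min a ((t:ℝ):EReal)) ((-M:ℝ):EReal) = max (min b ((t:ℝ):EReal)) ((-M:ℝ):EReal)) :
    a = b := by
  rcases lt_trichotomy a b with hl | he | hg
  · exact absurd hl (recover_mm_aux h)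
  · exact he
  · exact absurd hg (recover_mm_aux (fun t M htM => (h t M htM).symm))

lemma recover_idem_aux {a b : EReal} (hb : b ≤ 0)
    (h : ∀ M : ℝ, 0 < M → max a ((-M:ℝ):EReal) = max b ((-M:ℝ):EReal)) :
    ¬ a < b := by
  intro hab
  have hbbot : b ≠ ⊥ := fun h' => not_lt_bot (h' ▸ hab)
  have hbtop : b ≠ ⊤ := fun h' => by simp [h'] at hb
  obtain ⟨s, rfl⟩ := real_of b hbbot hbtop
  have hM : (0:ℝ) < |s| + 1 := by positivity
  have hMs : ((-(|s|+1):ℝ):EReal) < ↑s := by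
    exact_mod_cast (by have := neg_abs_le s; linarith : (-(|s|+1):ℝ) < s)
  have heq := h (|s|+1) hM
  rw [max_eq_left hMs.le] at heq
  have hlt : max a ((-(|s|+1):ℝ):EReal) < ((s:ℝ):EReal) := max_lt hab hMs
  rw [heq] at hlt
  exact lt_irrefl _ hlt

lemma recover_idem {a b : EReal} (ha : a ≤ 0) (hb : b ≤ 0)
    (h : ∀ M : ℝ, 0 < M → max a ((-M:ℝ):EReal) = max b ((-M:ℝ):EReal)) :
    a = b := by
  rcases lt_trichotomy a b with hl | he | hg
  · exact absurd hl (recover_idem_aux hb h)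
  · exact he
  · exact absurd hg (recover_idem_aux ha (fun M hM => (h M hM).symm))

lemma ereal_eq_of_toReal_eq {a b : EReal} {lo hi : ℝ} (ha1 : ↑lo ≤ a) (ha2 : a ≤ ↑hi)
    (hb1 : ↑lo ≤ b) (hb2 : b ≤ ↑hi) (h : a.toReal = b.toReal) : a = b := by
  have habot : a ≠ ⊥ := fun h' => by rw [h'] at ha1; exact (EReal.bot_lt_coe lo).not_ge ha1
  have hatop : a ≠ ⊤ := fun h' => by rw [h'] at ha2; exact (EReal.coe_lt_top hi).not_ge ha2
  have hbbot : b ≠ ⊥ := fun h' => by rw [h'] at hb1; exact (EReal.bot_lt_coe lo).not_ge hb1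
  have hbtop : b ≠ ⊤ := fun h' => by rw [h'] at hb2; exact (EReal.coe_lt_top hi).not_ge hb2
  rw [← EReal.coe_toReal hatop habot, ← EReal.coe_toReal hbtop hbbot, h]


lemma respects_ball {E : X → X → Prop} (hE : Equivalence E) (p : X) (c d : ℝ) :
    ∀ a b : X, E a b →
      (fun q => if E p q then c else d) a = (fun q => if E p q then c else d) b := by
  intro a b hab
  by_cases h1 : E p a
  · simp only [if_pos h1, if_pos (hE.trans h1 hab)]
  · simp only [if_neg h1, if_neg (fun h2 => h1 (hE.trans h2 (hE.symm hab)))]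

lemma idem_agree_iff {E : X → X → Prop} (hE : Equivalence E)
    {n m} {x : Fin (n+1) → X} {y : Fin (m+1) → X}
    {α : Fin (n+1) → EReal} {β : Fin (m+1) → EReal}
    (hα : ∀ i, α i ≤ 0) (hβ : ∀ j, β j ≤ 0) (hα0 : ∃ i, α i = 0) (hβ0 : ∃ j, β j = 0) :
    (∀ φ : X → ℝ, (∀ a b, E a b → φ a = φ b) → idemOf x α φ = idemOf y β φ) ↔
      ∀ p, barW E x α p = barW E y β p := by
  constructor
  · intro h p
    refine recover_idem (barW_le_zero hα p) (barW_le_zero hβ p) ?_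
    intro M hM
    have hval := h (fun q => if E p q then (0:ℝ) else -M) (respects_ball hE p 0 (-M))
    unfold idemOf at hval
    simp only at hval
    rw [test_idem hE hα hα0 p M hM.le, test_idem hE hβ hβ0 p M hM.le] at hval
    refine ereal_eq_of_toReal_eq (lo := -M) (hi := 0) (le_max_right _ _)
      (max_le (barW_le_zero hα p) ?_) (le_max_right _ _)
      (max_le (barW_le_zero hβ p) ?_) hval
    · exact_mod_cast (by linarith : (-M:ℝ) ≤ 0)
    · exact_mod_cast (by linarith : (-M:ℝ) ≤ 0)
  · intro h φ hφ
    unfold idemOf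
    congr 1
    exact sup_congr hE (fun a r => a + ((r:ℝ) : EReal))
      (fun a b r hab _ => add_le_add_left hab _)
      (fun r => EReal.bot_add _) hα hβ h hφ

lemma mm_agree_iff {E : X → X → Prop} (hE : Equivalence E)
    {n m} {x : Fin (n+1) → X} {y : Fin (m+1) → X}
    {α : Fin (n+1) → EReal} {β : Fin (m+1) → EReal}
    (hα : ∀ i, α i ≤ 0) (hβ : ∀ j, β j ≤ 0) (hα0 : ∃ i, α i = 0) (hβ0 : ∃ j, β j = 0) :
    (∀ φ : X → ℝ, (∀ a b, E a b → φ a = φ b) →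
        mmOf x (fun i => lam (α i)) φ = mmOf y (fun j => lam (β j)) φ) ↔
      ∀ p, barW E x α p = barW E y β p := by
  constructor
  · intro h p
    have key : barW E x (fun i => lam (α i)) p = barW E y (fun j => lam (β j)) p := by
      apply recover_mm
      intro t M htM
      have hval := h (fun q => if E p q then t else -M) (respects_ball hE p t (-M))
      unfold mmOf at hval
      simp only at hval
      rw [test_mm hE ⟨hα0.choose, by rw [hα0.choose_spec, lam_zero]⟩ p t M htM,
        test_mm hE ⟨hβ0.choose, by rw [hβ0.choose_spec, lam_zero]⟩ p t M htM] at hval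
      refine ereal_eq_of_toReal_eq (lo := -M) (hi := t) (le_max_right _ _)
        (max_le ((min_le_right _ _)) ?_) (le_max_right _ _)
        (max_le ((min_le_right _ _)) ?_) hval
      · exact_mod_cast htM
      · exact_mod_cast htM
    rw [barW_lam hα p, barW_lam hβ p] at key
    exact lam_injOn (barW_le_zero hα p) (barW_le_zero hβ p) key
  · intro h φ hφ
    unfold mmOf
    congr 1
    exact sup_congr hE (fun a r => min (lam a) ((r:ℝ) : EReal))
      (fun a b r hab hb => min_le_min (lam_mono hab hb) le_rfl)
      (fun r => by show min (lam ⊥) ((r:ℝ) : EReal) = ⊥; rw [lam_bot]; exact min_eq_left bot_le)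
      hα hβ h hφ


lemma welldef {n m} {x : Fin (n+1) → X} {y : Fin (m+1) → X}
    {α : Fin (n+1) → EReal} {β : Fin (m+1) → EReal}
    (hα : ∀ i, α i ≤ 0) (hβ : ∀ j, β j ≤ 0) (hα0 : ∃ i, α i = 0) (hβ0 : ∃ j, β j = 0)
    (h : idemOf x α = idemOf y β) :
    mmOf x (fun i => lam (α i)) = mmOf y (fun j => lam (β j)) := by
  have hbar := (idem_agree_iff eq_equivalence hα hβ hα0 hβ0).mp (fun φ _ => by rw [h])
  funext φ
  exact (mm_agree_iff eq_equivalence hα hβ hα0 hβ0).mpr hbar φ (fun a b hab => by rw [hab])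

lemma mm_inj {n m} {x : Fin (n+1) → X} {y : Fin (m+1) → X}
    {α : Fin (n+1) → EReal} {β : Fin (m+1) → EReal}
    (hα : ∀ i, α i ≤ 0) (hβ : ∀ j, β j ≤ 0) (hα0 : ∃ i, α i = 0) (hβ0 : ∃ j, β j = 0)
    (h : mmOf x (fun i => lam (α i)) = mmOf y (fun j => lam (β j))) :
    idemOf x α = idemOf y β := by
  have hbar := (mm_agree_iff eq_equivalence hα hβ hα0 hβ0).mp (fun φ _ => by rw [h])
  funext φ
  exact (idem_agree_iff eq_equivalence hα hβ hα0 hβ0).mpr hbar φ (fun a b hab => by rw [hab])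

noncomputable def hmap (μ : (X → ℝ) → ℝ) : (X → ℝ) → ℝ :=
  if hμ : ∃ (n : ℕ) (x : Fin (n + 1) → X) (α : Fin (n + 1) → EReal),
      (∀ i, α i ≤ 0) ∧ (∃ i, α i = 0) ∧ μ = idemOf x α then
    mmOf hμ.choose_spec.choose (fun i => lam (hμ.choose_spec.choose_spec.choose i))
  else μ

lemma hmap_eq {n} {x : Fin (n+1) → X} {α : Fin (n+1) → EReal}
    (hα : ∀ i, α i ≤ 0) (h0 : ∃ i, α i = 0) :
    hmap (idemOf x α) = mmOf x (fun i => lam (α i)) := by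
  have hI : ∃ (n' : ℕ) (x' : Fin (n' + 1) → X) (α' : Fin (n' + 1) → EReal),
      (∀ i, α' i ≤ 0) ∧ (∃ i, α' i = 0) ∧ idemOf x α = idemOf x' α' := ⟨n, x, α, hα, h0, rfl⟩
  unfold hmap
  rw [dif_pos hI]
  obtain ⟨hα', h0', heq⟩ := hI.choose_spec.choose_spec.choose_spec
  exact welldef hα' hα h0' h0 heq.symm

lemma ultra_equiv {Y : Type*} [MetricSpace Y]
    (hY : ∀ x y z : Y, dist x y ≤ max (dist x z) (dist z y)) {r : ℝ≥0∞} (hr : 0 < r) :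
    Equivalence (fun a b : Y => edist a b < r) := by
  constructor
  · intro a; simpa [edist_self] using hr
  · intro a b h; rwa [edist_comm]
  · intro a b c hab hbc
    have h := hY a c b
    rcases le_total (dist a b) (dist b c) with h1 | h1
    · have h2 : dist a c ≤ dist b c := le_trans h (by rw [max_eq_right h1])
      calc edist a c = ENNReal.ofReal (dist a c) := edist_dist a c
        _ ≤ ENNReal.ofReal (dist b c) := ENNReal.ofReal_le_ofReal h2
        _ = edist b c := (edist_dist b c).symm
        _ < r := hbc
    · have h2 : dist a c ≤ dist a b := le_trans h (by rw [max_eq_left h1])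
      calc edist a c = ENNReal.ofReal (dist a c) := edist_dist a c
        _ ≤ ENNReal.ofReal (dist a b) := ENNReal.ofReal_le_ofReal h2
        _ = edist a b := (edist_dist a b).symm
        _ < r := hab

end IJAux

/-- The map `h_X : I_ω(X) → J_ω(X)`,
`h_X(∨ᵢ αᵢ ⊙ δ_{xᵢ}) = ∨ᵢ λ(αᵢ) ∧ δ_{xᵢ}`, is a well-defined bijection and an
isometry; in particular `(I_ω(X), d̂)` and `(J_ω(X), d̂)` are isometric. -/
theorem Iomega_isometric_Jomega {X : Type*} [MetricSpace X] (hX : IsUltra X) :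
    ∃ h : ((X → ℝ) → ℝ) → ((X → ℝ) → ℝ),
      (∀ (n : ℕ) (x : Fin (n + 1) → X) (α : Fin (n + 1) → EReal),
          (∀ i, α i ≤ 0) → (∃ i, α i = 0) →
          h (idemOf x α) = mmOf x (fun i => lam (α i))) ∧
      Set.BijOn h {μ | IsIdem μ} {μ | IsMM μ} ∧
      (∀ μ ν, IsIdem μ → IsIdem ν →
        dHatE (eD X) (h μ) (h ν) = dHatE (eD X) μ ν) := by
  refine ⟨IJAux.hmap, ?_, ⟨?_, ?_, ?_⟩, ?_⟩
  · intro n x α hα h0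
    exact IJAux.hmap_eq hα h0
  · -- MapsTo
    intro μ hμ
    obtain ⟨n, x, α, -, hα, h0, rfl⟩ : ∃ (n : ℕ) (x : Fin (n + 1) → X)
        (α : Fin (n + 1) → EReal), (∀ i, x i ∈ Set.univ) ∧ (∀ i, α i ≤ 0) ∧
        (∃ i, α i = 0) ∧ μ = idemOf x α := hμ
    show IsMM _
    rw [IJAux.hmap_eq hα h0]
    exact ⟨n, x, fun i => lam (α i), fun _ => Set.mem_univ _,
      ⟨h0.choose, by show lam (α h0.choose) = ⊤; rw [h0.choose_spec]; exact IJAux.lam_zero⟩, rfl⟩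
  · -- InjOn
    intro μ hμ ν hν h
    obtain ⟨n, x, α, -, hα, hα0, rfl⟩ : ∃ (n : ℕ) (x : Fin (n + 1) → X)
        (α : Fin (n + 1) → EReal), (∀ i, x i ∈ Set.univ) ∧ (∀ i, α i ≤ 0) ∧
        (∃ i, α i = 0) ∧ μ = idemOf x α := hμ
    obtain ⟨m, y, β, -, hβ, hβ0, rfl⟩ : ∃ (m : ℕ) (y : Fin (m + 1) → X)
        (β : Fin (m + 1) → EReal), (∀ i, y i ∈ Set.univ) ∧ (∀ i, β i ≤ 0) ∧
        (∃ i, β i = 0) ∧ ν = idemOf y β := hν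
    rw [IJAux.hmap_eq hα hα0, IJAux.hmap_eq hβ hβ0] at h
    exact IJAux.mm_inj hα hβ hα0 hβ0 h
  · -- SurjOn
    intro ν hν
    obtain ⟨m, y, γ, -, ⟨j0, hj0⟩, rfl⟩ : ∃ (m : ℕ) (y : Fin (m + 1) → X)
        (γ : Fin (m + 1) → EReal), (∀ i, y i ∈ Set.univ) ∧ (∃ i, γ i = ⊤) ∧
        ν = mmOf y γ := hν
    have h1 : ∀ j, IJAux.lamInv (γ j) ≤ 0 := fun j => IJAux.lamInv_le _
    have h2 : ∃ j, IJAux.lamInv (γ j) = 0 := ⟨j0, by rw [hj0, IJAux.lamInv_top]⟩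
    refine ⟨idemOf y (fun j => IJAux.lamInv (γ j)),
      ⟨m, y, _, fun _ => Set.mem_univ _, h1, h2, rfl⟩, ?_⟩
    show IJAux.hmap _ = _
    rw [IJAux.hmap_eq h1 h2]
    have h3 : (fun j => lam (IJAux.lamInv (γ j))) = γ := funext fun j => IJAux.lam_lamInv _
    rw [h3]
  · -- isometry
    intro μ ν hμ hν
    obtain ⟨n, x, α, -, hα, hα0, rfl⟩ : ∃ (n : ℕ) (x : Fin (n + 1) → X)
        (α : Fin (n + 1) → EReal), (∀ i, x i ∈ Set.univ) ∧ (∀ i, α i ≤ 0) ∧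
        (∃ i, α i = 0) ∧ μ = idemOf x α := hμ
    obtain ⟨m, y, β, -, hβ, hβ0, rfl⟩ : ∃ (m : ℕ) (y : Fin (m + 1) → X)
        (β : Fin (m + 1) → EReal), (∀ i, y i ∈ Set.univ) ∧ (∀ i, β i ≤ 0) ∧
        (∃ i, β i = 0) ∧ ν = idemOf y β := hν
    rw [IJAux.hmap_eq hα hα0, IJAux.hmap_eq hβ hβ0]
    unfold dHatE
    congr 1
    ext r
    simp only [Set.mem_setOf_eq]
    constructor
    · rintro ⟨hr, hcond⟩
      have hE := IJAux.ultra_equiv hX hr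
      exact ⟨hr, (IJAux.idem_agree_iff hE hα hβ hα0 hβ0).mpr
        ((IJAux.mm_agree_iff hE hα hβ hα0 hβ0).mp hcond)⟩
    · rintro ⟨hr, hcond⟩
      have hE := IJAux.ultra_equiv hX hr
      exact ⟨hr, (IJAux.mm_agree_iff hE hα hβ hα0 hβ0).mpr
        ((IJAux.idem_agree_iff hE hα hβ hα0 hβ0).mp hcond)⟩

end
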